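/- The topological retract of a walk in a graph is unique: it does not depend on the choice or order of the one-step retraction operations performed. -/
import Mathlib


/-- One-step retraction of a walk: delete a retractable segment `x y x`, keeping the first `x`. -/
def WalkStep {V : Type*} (w w' : List V) : Prop :=
  ∃ l₁ x y l₂, w = l₁ ++ x :: y :: x :: l₂ ∧ w' = l₁ ++ x :: l₂

/-- A walk admits no one-step retraction. -/
def WalkReduced {V : Type*} (w : List V) : Prop := ∀ w', ¬ WalkStep w w'

/-- One-step retraction of a closed walk (given as a cyclic sequence, i.e. a list up to
rotation): delete a cyclically retractable segment `x y x`; a closed walk of length two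
retracts to the empty closed walk. -/
def CycStep {V : Type*} (w w' : List V) : Prop :=
  (∃ n x y l, w.rotate n = x :: y :: x :: l ∧ w' = x :: l) ∨
  (∃ x y, w = [x, y] ∧ w' = [])

/-- A closed walk admits no one-step retraction. -/
def CycReduced {V : Type*} (w : List V) : Prop := ∀ w', ¬ CycStep w w'

/-- A closed walk is null-homotopic if it reduces to the empty closed walk by
one-step retractions. -/
def NullHomotopic {V : Type*} (w : List V) : Prop := Relation.ReflTransGen CycStep w []

lemma walkStep_diamond_aux {V : Type*} {l₁ m₁ l₂ m₂ : List V} {x y a b : V}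
    (hlen : l₁.length ≤ m₁.length)
    (heq : l₁ ++ x :: y :: x :: l₂ = m₁ ++ a :: b :: a :: m₂) :
    ∃ d, Relation.ReflGen WalkStep (l₁ ++ x :: l₂) d ∧
      Relation.ReflGen WalkStep (m₁ ++ a :: m₂) d := by
  obtain ⟨t, rfl⟩ : l₁ <+: m₁ := by
    refine List.prefix_of_prefix_length_le ⟨_, rfl⟩ ⟨_, heq.symm⟩ hlen
  rw [List.append_assoc] at heq
  have heq' : x :: y :: x :: l₂ = t ++ a :: b :: a :: m₂ :=
    List.append_cancel_left heq
  match t with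
  | [] =>
    simp only [List.nil_append] at heq'
    obtain ⟨rfl, rfl, -, rfl⟩ : x = a ∧ y = b ∧ x = a ∧ l₂ = m₂ := by
      injection heq' with h1 h2; injection h2 with h3 h4; injection h4 with h5 h6
      exact ⟨h1, h3, h5, h6⟩
    exact ⟨l₁ ++ x :: l₂, Relation.ReflGen.refl, by simpa using Relation.ReflGen.refl⟩
  | [c] =>
    simp only [List.cons_append, List.nil_append] at heq'
    obtain ⟨rfl, rfl, rfl, rfl⟩ : x = c ∧ y = a ∧ x = b ∧ l₂ = a :: m₂ := by
      injection heq' with h1 h2; injection h2 with h3 h4; injection h4 with h5 h6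
      exact ⟨h1, h3, h5, h6⟩
    exact ⟨l₁ ++ x :: y :: m₂, Relation.ReflGen.refl, by simpa using Relation.ReflGen.refl⟩
  | [c, d] =>
    simp only [List.cons_append, List.nil_append] at heq'
    obtain ⟨rfl, rfl, rfl, rfl⟩ : x = c ∧ y = d ∧ x = a ∧ l₂ = b :: a :: m₂ := by
      injection heq' with h1 h2; injection h2 with h3 h4; injection h4 with h5 h6
      exact ⟨h1, h3, h5, h6⟩
    refine ⟨l₁ ++ x :: m₂, Relation.ReflGen.single ⟨l₁, x, b, m₂, by simp, rfl⟩,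
      Relation.ReflGen.single ⟨l₁, x, y, m₂, by simp, rfl⟩⟩
  | c :: d :: e :: t' =>
    simp only [List.cons_append] at heq'
    obtain ⟨rfl, rfl, rfl, rfl⟩ : x = c ∧ y = d ∧ x = e ∧ l₂ = t' ++ a :: b :: a :: m₂ := by
      injection heq' with h1 h2; injection h2 with h3 h4; injection h4 with h5 h6
      exact ⟨h1, h3, h5, h6⟩
    refine ⟨l₁ ++ x :: t' ++ a :: m₂,
      Relation.ReflGen.single ⟨l₁ ++ x :: t', a, b, m₂, by simp, by simp⟩,
      Relation.ReflGen.single ⟨l₁, x, y, t' ++ a :: m₂, by simp, by simp⟩⟩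

lemma walkStep_diamond {V : Type*} {w u v : List V} (hu : WalkStep w u) (hv : WalkStep w v) :
    ∃ d, Relation.ReflGen WalkStep u d ∧ Relation.ReflGen WalkStep v d := by
  obtain ⟨l₁, x, y, l₂, rfl, rfl⟩ := hu
  obtain ⟨m₁, a, b, m₂, heq, rfl⟩ := hv
  rcases le_total l₁.length m₁.length with h | h
  · exact walkStep_diamond_aux h heq
  · obtain ⟨d, h1, h2⟩ := walkStep_diamond_aux h heq.symm
    exact ⟨d, h2, h1⟩

lemma walkReduced_eq_of_reflTransGen {V : Type*} {r d : List V}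
    (hr : WalkReduced r) (h : Relation.ReflTransGen WalkStep r d) : r = d := by
  rcases Relation.ReflTransGen.cases_head h with rfl | ⟨c, hc, _⟩
  · rfl
  · exact absurd hc (hr c)

/-- The topological retract of a walk is unique: any two walks with no retractable segment
obtained from a given walk of a graph by one-step retractions coincide. -/
theorem walk_retract_unique {V : Type*} (G : SimpleGraph V) (w r₁ r₂ : List V)
    (hw : w.Chain' G.Adj)
    (h₁ : Relation.ReflTransGen WalkStep w r₁) (h₂ : Relation.ReflTransGen WalkStep w r₂)
    (hr₁ : WalkReduced r₁) (hr₂ : WalkReduced r₂) : r₁ = r₂ := by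
  have hcr : ∀ a b c : List V, WalkStep a b → WalkStep a c →
      ∃ d, Relation.ReflGen WalkStep b d ∧ Relation.ReflTransGen WalkStep c d := by
    intro a b c hb hc
    obtain ⟨d, h1, h2⟩ := walkStep_diamond hb hc
    exact ⟨d, h1, h2.to_reflTransGen⟩
  obtain ⟨d, hd1, hd2⟩ := Relation.church_rosser hcr h₁ h₂
  rw [walkReduced_eq_of_reflTransGen hr₁ hd1, walkReduced_eq_of_reflTransGen hr₂ hd2]
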